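/- Let p be a prime, f ∈ ℤ_p[X] monic and irreducible with root α, 𝕂 = ℚ_p(α), w the unique extension of ν_p to 𝕂, and φ ∈ ℤ_p[X] a monic polynomial whose reduction mod p is irreducible and such that f̄ is a power of φ̄. Then for every P ∈ ℤ_p[X], w(P(α)) ≥ ν_p(P), with equality if and only if φ̄ does not divide the reduction of P/p^v mod p, where v = ν_p(P) is the Gauss valuation of P. -/

import Mathlib

open Polynomial

/-- The `p`-adic Gauss valuation of a polynomial over `ℤ_[p]`. -/
noncomputable def gaussVal (p : ℕ) [Fact p.Prime] (P : Polynomial ℤ_[p]) : ℕ∞ :=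
  ⨅ i ∈ P.support, (((P.coeff i : ℚ_[p]).valuation).toNat : ℕ∞)

private lemma coe_nsmul' (n : ℕ) (q : ℚ) :
    (n • (q : WithTop ℚ)) = ((n • q : ℚ) : WithTop ℚ) := by
  induction n with
  | zero => simp
  | succ k ih => rw [succ_nsmul, succ_nsmul, ih, ← WithTop.coe_add]

/-- Let `f ∈ ℤ_p[X]` be monic and irreducible over `ℚ_p` with root `α` generating
`𝕂 = ℚ_p(α)`, let `w` be the (unique) valuation of `𝕂` extending `ν_p`, and let `φ` be
monic with irreducible reduction such that `f̄` is a power of `φ̄`.  Then for every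
`P ∈ ℤ_p[X]` with Gauss valuation `v` and `P = p^v·Q`, one has `w(P(α)) ≥ ν_p(P)`, with
equality iff `φ̄` does not divide `Q̄ = (P/p^v)‾` mod `p`. -/
theorem valuation_ge_gaussVal (p : ℕ) [Fact p.Prime]
    (f φ : Polynomial ℤ_[p]) (hf : f.Monic) (hφ : φ.Monic)
    (hirr : Irreducible (f.map (PadicInt.Coe.ringHom (p := p))))
    (hφirr : Irreducible (φ.map (PadicInt.toZMod (p := p))))
    (l : ℕ)
    (hfbar : f.map (PadicInt.toZMod (p := p)) = (φ.map (PadicInt.toZMod (p := p))) ^ l)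
    (K : Type*) [Field K] [Algebra ℚ_[p] K]
    (α : K) (hroot : Polynomial.aeval α (f.map (PadicInt.Coe.ringHom (p := p))) = 0)
    (hgen : Algebra.adjoin ℚ_[p] ({α} : Set K) = ⊤)
    -- w is a valuation of K extending ν_p
    (w : AddValuation K (WithTop ℚ))
    (hw : ∀ x : ℚ_[p], x ≠ 0 →
      w (algebraMap ℚ_[p] K x) = ((x.valuation : ℚ) : WithTop ℚ)) :
    ∀ (P Q : Polynomial ℤ_[p]) (v : ℕ),
      gaussVal p P = (v : ℕ∞) →
      P = Polynomial.C ((p : ℤ_[p]) ^ v) * Q →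
      ((v : ℚ) : WithTop ℚ) ≤ w (Polynomial.aeval α (P.map (PadicInt.Coe.ringHom (p := p)))) ∧
      (w (Polynomial.aeval α (P.map (PadicInt.Coe.ringHom (p := p)))) = ((v : ℚ) : WithTop ℚ)
        ↔ ¬ (φ.map (PadicInt.toZMod (p := p)) ∣ Q.map (PadicInt.toZMod (p := p)))) := by
  have hp : p.Prime := Fact.out
  set cf : ℤ_[p] →+* ℚ_[p] := PadicInt.Coe.ringHom with hcf
  set red : ℤ_[p] →+* ZMod p := PadicInt.toZMod with hred
  let ev : Polynomial ℤ_[p] →+* K :=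
    ((Polynomial.aeval α : Polynomial ℚ_[p] →ₐ[ℚ_[p]] K) :
      Polynomial ℚ_[p] →+* K).comp (Polynomial.mapRingHom cf)
  have hev : ∀ R : Polynomial ℤ_[p], ev R = Polynomial.aeval α (R.map cf) := fun _ => rfl
  have hevC : ∀ c : ℤ_[p], ev (Polynomial.C c) = algebraMap ℚ_[p] K (cf c) := by
    intro c
    rw [hev, Polynomial.map_C, Polynomial.aeval_C]
  -- surjectivity of the reduction map
  haveI : NeZero p := ⟨hp.ne_zero⟩
  have hsurj : Function.Surjective (red : ℤ_[p] →+* ZMod p) := by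
    intro x
    obtain ⟨n, rfl⟩ := ZMod.natCast_zmod_surjective x
    exact ⟨n, map_natCast red n⟩
  -- basic nonnegativity of w on ℤ_p
  have h0c : ∀ c : ℤ_[p], 0 ≤ w (algebraMap ℚ_[p] K (cf c)) := by
    intro c
    by_cases hc : cf c = 0
    · rw [hc, map_zero, w.map_zero]; exact le_top
    · rw [hw _ hc]
      have h1 : (0 : ℤ) ≤ (cf c).valuation := PadicInt.valuation_coe_nonneg (x := c)
      exact_mod_cast h1
  have hp0 : (p : ℚ_[p]) ≠ 0 := Nat.cast_ne_zero.mpr hp.ne_zero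
  have hwp : w (algebraMap ℚ_[p] K (p : ℚ_[p])) = ((1 : ℚ) : WithTop ℚ) := by
    rw [hw _ hp0, Padic.valuation_p]; norm_num
  -- f has positive degree
  have hn1 : 1 ≤ f.natDegree := by
    by_contra h
    push_neg at h
    have hfone : f = 1 := hf.natDegree_eq_zero.mp (Nat.lt_one_iff.mp h)
    rw [hfone, Polynomial.map_one] at hirr
    exact hirr.not_isUnit isUnit_one
  -- w α ≥ 0
  have hα : 0 ≤ w α := by
    by_contra hneg
    push_neg at hneg
    have hne : w α ≠ ⊤ := ne_top_of_lt hneg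
    obtain ⟨q, hq⟩ := WithTop.ne_top_iff_exists.mp hne
    have hqneg : q < 0 := by
      rw [← hq] at hneg
      exact_mod_cast hneg
    set n := f.natDegree with hn
    have hsum : (α ^ n) = -∑ i ∈ Finset.range n, (f.map cf).coeff i • α ^ i := by
      have h := hroot
      rw [Polynomial.aeval_eq_sum_range, hf.natDegree_map cf, Finset.sum_range_succ] at h
      have hcn : (f.map cf).coeff n = 1 := by
        rw [Polynomial.coeff_map, hf.coeff_natDegree, map_one]
      rw [hcn, one_smul] at h
      exact eq_neg_of_add_eq_zero_right h
    have hterm : ∀ i ∈ Finset.range n,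
        (((((n : ℚ) - 1) * q : ℚ)) : WithTop ℚ) ≤ w ((f.map cf).coeff i • α ^ i) := by
      intro i hi
      rw [Algebra.smul_def, w.map_mul, w.map_pow, ← hq, coe_nsmul', nsmul_eq_mul]
      have hile : (i : ℚ) ≤ (n : ℚ) - 1 := by
        have : (i : ℚ) ≤ ((n - 1 : ℕ) : ℚ) :=
          Nat.cast_le.mpr (Nat.le_sub_one_of_lt (Finset.mem_range.mp hi))
        rwa [Nat.cast_sub hn1] at this
      have h2 : ((n : ℚ) - 1) * q ≤ (i : ℚ) * q :=
        mul_le_mul_of_nonpos_right hile hqneg.le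
      calc (((((n : ℚ) - 1) * q : ℚ)) : WithTop ℚ) ≤ (((i : ℚ) * q : ℚ) : WithTop ℚ) := by
            exact_mod_cast h2
        _ = 0 + (((i : ℚ) * q : ℚ) : WithTop ℚ) := (zero_add _).symm
        _ ≤ w (algebraMap ℚ_[p] K ((f.map cf).coeff i)) + (((i : ℚ) * q : ℚ) : WithTop ℚ) := by
            apply add_le_add_left
            have : (f.map cf).coeff i = cf (f.coeff i) := Polynomial.coeff_map cf i
            rw [this]
            exact h0c _
    have hge : (((((n : ℚ) - 1) * q : ℚ)) : WithTop ℚ) ≤ w (α ^ n) := by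
      rw [hsum, w.map_neg]
      exact w.map_le_sum hterm
    have heq : w (α ^ n) = (((n : ℚ) * q : ℚ) : WithTop ℚ) := by
      rw [w.map_pow, ← hq, coe_nsmul', nsmul_eq_mul]
    rw [heq] at hge
    have h3 : ((n : ℚ) - 1) * q ≤ (n : ℚ) * q := by exact_mod_cast hge
    have h5 : ((n : ℚ) - 1) * q = (n : ℚ) * q - q := by ring
    linarith
  -- general lower bound for w (ev R)
  have hbound : ∀ (R : Polynomial ℤ_[p]) (t : WithTop ℚ),
      (∀ i, t ≤ w (algebraMap ℚ_[p] K (cf (R.coeff i)))) → t ≤ w (ev R) := by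
    intro R t hco
    rw [hev, Polynomial.aeval_eq_sum_range]
    apply w.map_le_sum
    intro i _
    rw [Algebra.smul_def, w.map_mul, Polynomial.coeff_map]
    calc t = t + 0 := (add_zero t).symm
      _ ≤ w (algebraMap ℚ_[p] K (cf (R.coeff i))) + w (α ^ i) := by
          apply add_le_add (hco i)
          rw [w.map_pow]
          exact nsmul_nonneg hα i
  have h0R : ∀ R : Polynomial ℤ_[p], 0 ≤ w (ev R) := fun R => hbound R 0 (fun i => h0c _)
  -- reduction zero implies valuation ≥ 1
  have hker : ∀ R : Polynomial ℤ_[p], R.map red = 0 → ((1 : ℚ) : WithTop ℚ) ≤ w (ev R) := by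
    intro R hR
    apply hbound
    intro i
    have hc0 : red (R.coeff i) = 0 := by
      have := congrArg (fun g => Polynomial.coeff g i) hR
      simpa [Polynomial.coeff_map] using this
    have hdvd : (p : ℤ_[p]) ∣ R.coeff i := by
      have hmem : R.coeff i ∈ RingHom.ker red := hc0
      rw [hred, PadicInt.ker_toZMod, PadicInt.maximalIdeal_eq_span_p,
        Ideal.mem_span_singleton] at hmem
      exact hmem
    obtain ⟨d, hd⟩ := hdvd
    rw [hd, map_mul, map_mul, w.map_mul]
    have hcp : cf ((p : ℕ) : ℤ_[p]) = (p : ℚ_[p]) := map_natCast cf p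
    rw [hcp, hwp]
    calc ((1 : ℚ) : WithTop ℚ) = ((1 : ℚ) : WithTop ℚ) + 0 := (add_zero _).symm
      _ ≤ ((1 : ℚ) : WithTop ℚ) + w (algebraMap ℚ_[p] K (cf d)) :=
          add_le_add_right (h0c d) _
  have hevf0 : ev f = 0 := hroot
  -- w (ev φ) > 0
  have hl1 : ((1 : ℚ) : WithTop ℚ) ≤ l • w (ev φ) := by
    have hmap : (f - φ ^ l).map red = 0 := by
      rw [Polynomial.map_sub, Polynomial.map_pow, hfbar, sub_self]
    have h1 := hker _ hmap
    have hsub : ev (f - φ ^ l) = -(ev φ ^ l) := by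
      rw [map_sub, map_pow, hevf0, zero_sub]
    rw [hsub, w.map_neg, w.map_pow] at h1
    exact h1
  have hφpos : 0 < w (ev φ) := by
    rcases (h0R φ).lt_or_eq with h | h
    · exact h
    · exfalso
      rw [← h, smul_zero] at hl1
      have : (1 : ℚ) ≤ (0 : ℚ) := by exact_mod_cast hl1
      norm_num at this
  -- main argument
  intro P Q v hgauss hPQ
  have e : Polynomial.aeval α (P.map cf) = ev P := rfl
  have hwp_pow : w (algebraMap ℚ_[p] K (cf ((p : ℤ_[p]) ^ v))) = ((v : ℚ) : WithTop ℚ) := by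
    rw [map_pow, map_pow, w.map_pow, map_natCast cf p, hwp, coe_nsmul']
    norm_num
  have hvalP : w (ev P) = ((v : ℚ) : WithTop ℚ) + w (ev Q) := by
    rw [hPQ, map_mul, hevC, w.map_mul, hwp_pow]
  constructor
  · rw [e, hvalP]
    exact le_add_of_nonneg_right (h0R Q)
  · rw [e, hvalP]
    have hcancel : (((v : ℚ) : WithTop ℚ) + w (ev Q) = ((v : ℚ) : WithTop ℚ)) ↔
        w (ev Q) = 0 := by
      constructor
      · intro h
        exact WithTop.add_left_cancel (WithTop.coe_ne_top (a := (v : ℚ)))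
          (by rw [h, add_zero])
      · intro h
        rw [h, add_zero]
    rw [hcancel]
    constructor
    · intro h hdvd
      obtain ⟨Sb, hSb⟩ := hdvd
      obtain ⟨S, hS⟩ := Polynomial.map_surjective red hsurj Sb
      have hmap0 : (Q - φ * S).map red = 0 := by
        rw [Polynomial.map_sub, Polynomial.map_mul, hS, ← hSb, sub_self]
      have h1 := hker _ hmap0
      have hsub : ev (Q - φ * S) = ev Q - ev φ * ev S := by rw [map_sub, map_mul]
      rw [hsub] at h1
      have hpos : 0 < w (ev Q) := by
        have hsplit : ev Q = (ev Q - ev φ * ev S) + ev φ * ev S := by ring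
        rw [hsplit]
        apply w.map_lt_add
        · exact lt_of_lt_of_le (by exact_mod_cast (by norm_num : (0:ℚ) < 1)) h1
        · rw [w.map_mul]
          exact lt_of_lt_of_le hφpos (le_add_of_nonneg_right (h0R S))
      rw [h] at hpos
      exact lt_irrefl _ hpos
    · intro hndvd
      have hcop : IsCoprime (φ.map red) (Q.map red) :=
        hφirr.coprime_iff_not_dvd.mpr hndvd
      obtain ⟨a, b, hab⟩ := hcop
      obtain ⟨A, hA⟩ := Polynomial.map_surjective red hsurj a
      obtain ⟨B, hB⟩ := Polynomial.map_surjective red hsurj b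
      have hmap0 : (A * φ + B * Q - 1).map red = 0 := by
        rw [Polynomial.map_sub, Polynomial.map_add, Polynomial.map_mul, Polynomial.map_mul,
          hA, hB, Polynomial.map_one, hab, sub_self]
      have h1 := hker _ hmap0
      set x := ev A * ev φ with hx
      set y := ev B * ev Q with hy
      have hxy : ev (A * φ + B * Q - 1) = (x + y) - 1 := by
        rw [map_sub, map_add, map_mul, map_mul, map_one]
      rw [hxy] at h1
      have hxyev : x + y = ev (A * φ + B * Q) := by
        rw [map_add, map_mul, map_mul]
      have hxy0 : w (x + y) = 0 := by
        have h2 : min (w (x + y)) (w ((x + y) - 1)) ≤ w ((x + y) - ((x + y) - 1)) :=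
          w.map_sub _ _
        rw [show (x + y) - ((x + y) - 1) = 1 by ring, w.map_one] at h2
        rcases min_le_iff.mp h2 with h3 | h3
        · refine le_antisymm h3 ?_
          rw [hxyev]
          exact h0R _
        · exfalso
          have h4 := le_trans h1 h3
          have : (1 : ℚ) ≤ (0 : ℚ) := by exact_mod_cast h4
          norm_num at this
      have hxpos : 0 < w x := by
        rw [hx, w.map_mul]
        exact lt_of_lt_of_le hφpos (le_add_of_nonneg_left (h0R A))
      have hy_le : w y ≤ 0 := by
        have h4 := w.map_add x y
        rw [hxy0] at h4
        rcases min_le_iff.mp h4 with h5 | h5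
        · exact absurd (lt_of_lt_of_le hxpos h5) (lt_irrefl 0)
        · exact h5
      have hy0 : w (ev B) + w (ev Q) = 0 := by
        rw [← w.map_mul, ← hy]
        refine le_antisymm hy_le ?_
        rw [hy, ← map_mul]
        exact h0R (B * Q)
      have hQle : w (ev Q) ≤ 0 := by
        calc w (ev Q) ≤ w (ev B) + w (ev Q) := le_add_of_nonneg_left (h0R B)
          _ = 0 := hy0
      exact le_antisymm hQle (h0R Q)
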